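/- Let K ⊆ L be an inclusion of Δ-sets. Then K → L is an elementary expansion of dimension n (i.e. there exist an n-simplex e ∈ L_n \ K_n and an index i ∈ {0,…,n} such that L is the disjoint union of K and {e, e d_i}, and e d_j ∈ K for all j ≠ i) if and only if there is a pushout square of Δ-sets with top row the horn inclusion Λ^i[n] → Δ[n], left vertical map Λ^i[n] → K, and bottom row the inclusion K → L, for some i ∈ {0,…,n}. -/

import Mathlib

/-- A Δ-set (semisimplicial set): graded sets of simplices with face maps satisfying
the semisimplicial identities. -/
structure DSet where
  X : ℕ → Type
  d : ∀ n, Fin (n + 2) → X (n + 1) → X n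
  rel : ∀ (n : ℕ) (i j : Fin (n + 2)), i ≤ j → ∀ x : X (n + 2),
    d n i (d (n + 1) j.succ x) = d n j (d (n + 1) i.castSucc x)

/-- A morphism of Δ-sets. -/
@[ext]
structure DHom (K L : DSet) where
  app : ∀ n, K.X n → L.X n
  comm : ∀ (n : ℕ) (i : Fin (n + 2)) (x : K.X (n + 1)),
    app n (K.d n i x) = L.d n i (app (n + 1) x)

/-- Composition of morphisms of Δ-sets. -/
def DHom.comp {K L M : DSet} (f : DHom K L) (g : DHom L M) : DHom K M where
  app n x := g.app n (f.app n x)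
  comm n i x := by (try dsimp only); rw [f.comm, g.comm]

/-- A commuting square of Δ-set morphisms is a pushout if it satisfies the universal
property of pushouts (pushouts of Δ-sets are computed levelwise in sets). -/
def IsPushoutSq {Z X Y P : DSet} (f : DHom Z X) (g : DHom Z Y)
    (u : DHom X P) (v : DHom Y P) : Prop :=
  f.comp u = g.comp v ∧
  ∀ (W : DSet) (a : DHom X W) (b : DHom Y W), f.comp a = g.comp b →
    ∃! c : DHom P W, u.comp c = a ∧ v.comp c = b

/-- A sub-Δ-set of `L`: a family of subsets of simplices closed under faces. -/
structure DSub (L : DSet) where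
  mem : ∀ n, Set (L.X n)
  stable : ∀ (n : ℕ) (i : Fin (n + 2)) (x : L.X (n + 1)),
    x ∈ mem (n + 1) → L.d n i x ∈ mem n

/-- The Δ-set underlying a sub-Δ-set. -/
def DSub.toDSet {L : DSet} (K : DSub L) : DSet where
  X n := {x // x ∈ K.mem n}
  d n i x := ⟨L.d n i x.1, K.stable n i x.1 x.2⟩
  rel n i j h x := Subtype.ext (L.rel n i j h x.1)

/-- The inclusion of a sub-Δ-set. -/
def DSub.ι {L : DSet} (K : DSub L) : DHom K.toDSet L where
  app _ x := x.1
  comm _ _ _ := rfl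

/-- The inclusion `K → L` is an elementary expansion of dimension `n+1`: there are an
`(n+1)`-simplex `e ∈ L \ K` and an index `i` such that `L` is the disjoint union of `K`
and `{e, e d_i}`, with `e d_j ∈ K` for all `j ≠ i`. -/
def IsElemExpansion (L : DSet) (K : DSub L) (n : ℕ) : Prop :=
  ∃ (e : L.X (n + 1)) (i : Fin (n + 2)),
    e ∉ K.mem (n + 1) ∧ L.d n i e ∉ K.mem n ∧
    (∀ j : Fin (n + 2), j ≠ i → L.d n j e ∈ K.mem n) ∧
    ∀ (m : ℕ) (z : L.X m),
      z ∈ K.mem m ∨ (∃ _ : m = n + 1, HEq z e) ∨ (∃ _ : m = n, HEq z (L.d n i e))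


/-- The semisimplicial identity for the coface maps `Fin.succAbove`. -/
lemma succAbove_succAbove {m : ℕ} (i j : Fin (m + 2)) (h : i ≤ j) (a : Fin (m + 1)) :
    (j.succ).succAbove (i.succAbove a) = (i.castSucc).succAbove (j.succAbove a) := by
  have h1 := SimplexCategory.δ_comp_δ (n := m) h
  have h2 := congrArg (fun f => (SimplexCategory.Hom.toOrderHom f) a) h1
  simpa [SimplexCategory.δ] using h2

/-- The standard simplex `Δ[n]` as a Δ-set: `m`-simplices are the injective monotone
maps `[m] → [n]`, with faces given by precomposition with the coface maps. -/
def simplexDSet (n : ℕ) : DSet where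
  X m := {f : Fin (m + 1) → Fin (n + 1) // Monotone f ∧ Function.Injective f}
  d m i f := ⟨f.1 ∘ i.succAbove, by
    constructor
    · exact f.2.1.comp (Fin.strictMono_succAbove i).monotone
    · exact f.2.2.comp (Fin.succAbove_right_injective)⟩
  rel n i j h x :=
    Subtype.ext (funext fun a => congrArg x.1 (succAbove_succAbove i j h a))

/-- The horn `Λ^i[n]` as a Δ-set: the simplices `f` of `Δ[n]` that miss some vertex
`j ≠ i` (equivalently, `Δ[n]` minus the top simplex and its `i`-th face). -/
def hornDSet (n : ℕ) (i : Fin (n + 1)) : DSet where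
  X m := {f : Fin (m + 1) → Fin (n + 1) // (Monotone f ∧ Function.Injective f) ∧
    ∃ j, j ≠ i ∧ j ∉ Set.range f}
  d m p f := ⟨f.1 ∘ p.succAbove, by
    refine ⟨⟨f.2.1.1.comp (Fin.strictMono_succAbove p).monotone,
      f.2.1.2.comp (Fin.succAbove_right_injective)⟩, ?_⟩
    obtain ⟨j, hj, hjr⟩ := f.2.2
    exact ⟨j, hj, fun ⟨a, ha⟩ => hjr ⟨p.succAbove a, ha⟩⟩⟩
  rel n i j h x :=
    Subtype.ext (funext fun a => congrArg x.1 (succAbove_succAbove i j h a))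

/-- The inclusion of the horn into the standard simplex. -/
def hornIncl (n : ℕ) (i : Fin (n + 1)) : DHom (hornDSet n i) (simplexDSet n) where
  app m f := ⟨f.1, f.2.1⟩
  comm _ _ _ := rfl

section Eval

lemma inj_card_le {m N : ℕ} (f : Fin (m + 1) → Fin (N + 1)) (hf : Function.Injective f) :
    m ≤ N := by
  have := Fintype.card_le_of_injective f hf
  simpa using this

lemma factor_of_missed {m N : ℕ} (f : Fin (m + 1) → Fin (N + 2)) {j : Fin (N + 2)}
    (hj : j ∉ Set.range f) : ∃ g : Fin (m + 1) → Fin (N + 1), f = j.succAbove ∘ g := by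
  have h : ∀ a, ∃ b, j.succAbove b = f a := by
    intro a
    have hne : f a ≠ j := fun h => hj ⟨a, h⟩
    have : f a ∈ ({j}ᶜ : Set (Fin (N + 2))) := by simpa using hne
    rw [← Fin.range_succAbove j] at this
    exact this
  choose g hg using h
  exact ⟨g, funext fun a => (hg a).symm⟩

lemma exists_factor {m N : ℕ} (f : Fin (m + 1) → Fin (N + 2))
    (hf : Function.Injective f) (h : m ≠ N + 1) :
    ∃ (j : Fin (N + 2)) (g : Fin (m + 1) → Fin (N + 1)), f = j.succAbove ∘ g := by
  have hm : m ≤ N + 1 := inj_card_le f hf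
  have hns : ¬ Function.Surjective f := by
    intro hs
    have := Fintype.card_le_of_surjective f hs
    simp only [Fintype.card_fin] at this
    omega
  rw [Function.Surjective] at hns
  push_neg at hns
  obtain ⟨j, hj⟩ := hns
  obtain ⟨g, hg⟩ := factor_of_missed f (fun ⟨a, ha⟩ => hj a ha)
  exact ⟨j, g, hg⟩

lemma inj_of_factor {m N : ℕ} {f : Fin (m + 1) → Fin (N + 2)} {j : Fin (N + 2)}
    {g : Fin (m + 1) → Fin (N + 1)} (hf : Function.Injective f)
    (hg : f = j.succAbove ∘ g) : Function.Injective g := by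
  intro a b hab
  exact hf (show f a = f b by rw [hg]; simp [Function.comp, hab])

/-- Evaluation: the face of `x` along an injective map `f`. -/
noncomputable def evalAux (L : DSet) : (N : ℕ) → L.X N → (m : ℕ) →
    (f : Fin (m + 1) → Fin (N + 1)) → Function.Injective f → L.X m
  | 0, x, m, f, hf =>
      cast (congrArg L.X (Nat.le_zero.mp (inj_card_le f hf)).symm) x
  | N + 1, x, m, f, hf =>
    if h : m = N + 1 then cast (congrArg L.X h.symm) x
    else
      evalAux L N (L.d N (exists_factor f hf h).choose x) m
        (exists_factor f hf h).choose_spec.choose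
        (inj_of_factor hf (exists_factor f hf h).choose_spec.choose_spec)

lemma evalAux_self (L : DSet) (N : ℕ) (x : L.X N) (f : Fin (N + 1) → Fin (N + 1))
    (hf : Function.Injective f) : evalAux L N x N f hf = x := by
  cases N with
  | zero => rw [evalAux]; exact cast_eq _ x
  | succ N => rw [evalAux]; rw [dif_pos rfl]; exact cast_eq _ x

end Eval
section EvalFactor

lemma missed_of_factor {m N : ℕ} {f : Fin (m + 1) → Fin (N + 2)} {j : Fin (N + 2)}
    {g : Fin (m + 1) → Fin (N + 1)} (hg : f = j.succAbove ∘ g) : j ∉ Set.range f := by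
  rintro ⟨a, ha⟩
  rw [hg] at ha
  exact Fin.succAbove_ne j (g a) ha

lemma evalAux_congr (L : DSet) {N m : ℕ} {x x' : L.X N} {f f' : Fin (m + 1) → Fin (N + 1)}
    {hf : Function.Injective f} {hf' : Function.Injective f'}
    (hx : x = x') (hff : f = f') : evalAux L N x m f hf = evalAux L N x' m f' hf' := by
  subst hx; subst hff; rfl

lemma eval_swap (L : DSet) (N : ℕ)
    (IH : ∀ (x : L.X (N + 1)) (m : ℕ) (j : Fin (N + 2)) (g : Fin (m + 1) → Fin (N + 1))
      (hf : Function.Injective (j.succAbove ∘ g)),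
      evalAux L (N + 1) x m (j.succAbove ∘ g) hf
        = evalAux L N (L.d N j x) m g (inj_of_factor hf rfl))
    (x : L.X (N + 2)) (m : ℕ) (a b : Fin (N + 3)) (hab : a < b)
    (ga gb : Fin (m + 1) → Fin (N + 2))
    (hinja : Function.Injective (a.succAbove ∘ ga))
    (hinjb : Function.Injective (b.succAbove ∘ gb))
    (hcomp : a.succAbove ∘ ga = b.succAbove ∘ gb) :
    evalAux L (N + 1) (L.d (N + 1) a x) m ga (inj_of_factor hinja rfl)
      = evalAux L (N + 1) (L.d (N + 1) b x) m gb (inj_of_factor hinjb rfl) := by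
  have hbne : b ≠ 0 := by
    intro h
    rw [h] at hab
    exact Fin.not_lt_zero a hab
  have hane : a ≠ Fin.last (N + 2) := by
    intro h
    exact absurd hab (by rw [h]; exact not_lt.mpr (Fin.le_last b))
  set a' : Fin (N + 2) := a.castPred hane with ha'def
  set b' : Fin (N + 2) := b.pred hbne with hb'def
  have ha' : a'.castSucc = a := Fin.castSucc_castPred a hane
  have hb' : b'.succ = b := Fin.succ_pred b hbne
  have hab' : a' ≤ b' := by
    rw [← Fin.castSucc_lt_succ_iff, ha', hb']
    exact hab
  have hma : a' ∉ Set.range gb := by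
    rintro ⟨y, hy⟩
    have h1 : b.succAbove (gb y) = a := by
      rw [hy, Fin.succAbove_of_castSucc_lt b a' (by rw [ha']; exact hab), ha']
    have : a ∈ Set.range (a.succAbove ∘ ga) := by
      rw [hcomp]; exact ⟨y, h1⟩
    exact missed_of_factor rfl this
  have hmb : b' ∉ Set.range ga := by
    rintro ⟨y, hy⟩
    have h1 : a.succAbove (ga y) = b := by
      rw [hy, Fin.succAbove_of_le_castSucc a b'
        (by rw [← ha']; exact Fin.castSucc_le_castSucc_iff.mpr hab'), hb']
    have : b ∈ Set.range (b.succAbove ∘ gb) := by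
      rw [← hcomp]; exact ⟨y, h1⟩
    exact missed_of_factor rfl this
  obtain ⟨h₁, hh₁⟩ := factor_of_missed ga hmb
  obtain ⟨h₂, hh₂⟩ := factor_of_missed gb hma
  have hexch : ∀ y, b.succAbove (a'.succAbove y) = a.succAbove (b'.succAbove y) := by
    intro y
    rw [← ha', ← hb']
    exact succAbove_succAbove a' b' hab' y
  have h12 : h₁ = h₂ := by
    funext z
    have e1 : a.succAbove (b'.succAbove (h₁ z)) = a.succAbove (ga z) := by rw [hh₁]; rfl
    have e2 : b.succAbove (a'.succAbove (h₂ z)) = b.succAbove (gb z) := by rw [hh₂]; rfl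
    have e3 : a.succAbove (ga z) = b.succAbove (gb z) := congrFun hcomp z
    have : a.succAbove (b'.succAbove (h₁ z)) = a.succAbove (b'.succAbove (h₂ z)) := by
      rw [e1, e3, ← e2, hexch]
    exact Fin.succAbove_right_injective (Fin.succAbove_right_injective this)
  have hga : Function.Injective ga := inj_of_factor hinja rfl
  have hgb : Function.Injective gb := inj_of_factor hinjb rfl
  have hia : Function.Injective (b'.succAbove ∘ h₁) := by rw [← hh₁]; exact hga
  have hib : Function.Injective (a'.succAbove ∘ h₂) := by rw [← hh₂]; exact hgb
  have step1 : evalAux L (N + 1) (L.d (N + 1) a x) m ga (inj_of_factor hinja rfl)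
      = evalAux L N (L.d N b' (L.d (N + 1) a x)) m h₁ (inj_of_factor hia rfl) := by
    rw [evalAux_congr L rfl hh₁]
    exact IH _ _ _ _ hia
  have step2 : evalAux L (N + 1) (L.d (N + 1) b x) m gb (inj_of_factor hinjb rfl)
      = evalAux L N (L.d N a' (L.d (N + 1) b x)) m h₂ (inj_of_factor hib rfl) := by
    rw [evalAux_congr L rfl hh₂]
    exact IH _ _ _ _ hib
  rw [step1, step2]
  have hrel : L.d N a' (L.d (N + 1) b x) = L.d N b' (L.d (N + 1) a x) := by
    have := L.rel N a' b' hab' x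
    rw [hb', ha'] at this
    exact this
  exact evalAux_congr L hrel.symm h12

lemma eval_two (L : DSet) (N : ℕ)
    (IH : ∀ (x : L.X (N + 1)) (m : ℕ) (j : Fin (N + 2)) (g : Fin (m + 1) → Fin (N + 1))
      (hf : Function.Injective (j.succAbove ∘ g)),
      evalAux L (N + 1) x m (j.succAbove ∘ g) hf
        = evalAux L N (L.d N j x) m g (inj_of_factor hf rfl))
    (x : L.X (N + 2)) (m : ℕ) (j j₀ : Fin (N + 3))
    (g g₀ : Fin (m + 1) → Fin (N + 2))
    (hinj : Function.Injective (j.succAbove ∘ g))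
    (hinj₀ : Function.Injective (j₀.succAbove ∘ g₀))
    (hc : j.succAbove ∘ g = j₀.succAbove ∘ g₀) :
    evalAux L (N + 1) (L.d (N + 1) j x) m g (inj_of_factor hinj rfl)
      = evalAux L (N + 1) (L.d (N + 1) j₀ x) m g₀ (inj_of_factor hinj₀ rfl) := by
  by_cases h : j = j₀
  · subst h
    have hgg : g = g₀ := by
      funext z
      exact Fin.succAbove_right_injective (p := j) (congrFun hc z)
    exact evalAux_congr L rfl hgg
  · rcases lt_or_gt_of_ne h with hlt | hgt
    · exact eval_swap L N IH x m j j₀ hlt g g₀ hinj hinj₀ hc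
    · exact (eval_swap L N IH x m j₀ j hgt g₀ g hinj₀ hinj hc.symm).symm

lemma eval_factor (L : DSet) : ∀ (N : ℕ) (x : L.X (N + 1)) (m : ℕ)
    (j : Fin (N + 2)) (g : Fin (m + 1) → Fin (N + 1))
    (hf : Function.Injective (j.succAbove ∘ g)),
    evalAux L (N + 1) x m (j.succAbove ∘ g) hf
      = evalAux L N (L.d N j x) m g (inj_of_factor hf rfl) := by
  intro N
  induction N with
  | zero =>
    intro x m j g hf
    have hm : m ≠ 0 + 1 := by
      intro h
      subst h
      obtain ⟨a, ha⟩ := (Finite.injective_iff_surjective).mp hf j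
      exact Fin.succAbove_ne j (g a) ha
    have hm0 : m = 0 := by
      have := inj_card_le g (inj_of_factor hf rfl)
      omega
    subst hm0
    set E := exists_factor (j.succAbove ∘ g) hf hm with hE
    have hg₀ : j.succAbove ∘ g = E.choose.succAbove ∘ E.choose_spec.choose :=
      E.choose_spec.choose_spec
    have hjj : E.choose = j := by
      by_contra hne
      have h1 : E.choose ∈ Set.range (j.succAbove) := by
        rw [Fin.range_succAbove]
        simpa using hne
      obtain ⟨j', hj'⟩ := h1
      have hg0 : g 0 = j' := Fin.eq_of_val_eq (by omega)
      have : (j.succAbove ∘ g) 0 = E.choose := by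
        simp only [Function.comp_apply, hg0, hj']
      exact missed_of_factor hg₀ ⟨0, this⟩
    conv_lhs => rw [evalAux]
    rw [dif_neg hm]
    rw [evalAux, evalAux, cast_eq, cast_eq, hjj]
  | succ N IH =>
    intro x m j g hf
    have hm : m ≠ N + 1 + 1 := by
      intro h
      subst h
      obtain ⟨a, ha⟩ := (Finite.injective_iff_surjective).mp hf j
      exact Fin.succAbove_ne j (g a) ha
    conv_lhs => rw [evalAux]
    rw [dif_neg hm]
    set E := exists_factor (j.succAbove ∘ g) hf hm with hE
    have hg₀ : j.succAbove ∘ g = E.choose.succAbove ∘ E.choose_spec.choose :=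
      E.choose_spec.choose_spec
    have hinj₀ : Function.Injective (E.choose.succAbove ∘ E.choose_spec.choose) := by
      rw [← hg₀]; exact hf
    exact eval_two L N IH x m E.choose j E.choose_spec.choose g hinj₀ hf hg₀.symm

end EvalFactor
section EvalMore

lemma eval_mem {L : DSet} (K : DSub L) : ∀ (N : ℕ) (x : L.X N), x ∈ K.mem N →
    ∀ (m : ℕ) (f : Fin (m + 1) → Fin (N + 1)) (hf : Function.Injective f),
    evalAux L N x m f hf ∈ K.mem m := by
  intro N
  induction N with
  | zero =>
    intro x hx m f hf
    rw [evalAux]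
    have h0 : m = 0 := Nat.le_zero.mp (inj_card_le f hf)
    subst h0
    rwa [cast_eq]
  | succ N IH =>
    intro x hx m f hf
    rw [evalAux]
    by_cases h : m = N + 1
    · subst h
      rwa [dif_pos rfl, cast_eq]
    · rw [dif_neg h]
      exact IH _ (K.stable N _ x hx) m _ _

lemma eval_comm (L : DSet) : ∀ (N : ℕ) (x : L.X N) (m : ℕ)
    (f : Fin (m + 2) → Fin (N + 1)) (hmono : Monotone f) (hf : Function.Injective f)
    (p : Fin (m + 2)),
    evalAux L N x m (f ∘ p.succAbove) (hf.comp Fin.succAbove_right_injective)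
      = L.d m p (evalAux L N x (m + 1) f hf) := by
  intro N
  induction N with
  | zero =>
    intro x m f hmono hf p
    exact absurd (inj_card_le f hf) (by omega)
  | succ N IH =>
    intro x m f hmono hf p
    by_cases h : m + 1 = N + 1
    · -- f is a monotone injection between equal types: f = id
      have hm : m = N := by omega
      subst hm
      have hid : f = id := by
        have hsm : StrictMono f := hmono.strictMono_of_injective hf
        exact (StrictMono.range_inj hsm strictMono_id).mp
          (by rw [Set.range_id, Set.range_eq_univ]
              exact Finite.injective_iff_surjective.mp hf)
      subst hid
      have hinj : Function.Injective (Fin.succAbove p ∘ (id : Fin (m + 1) → Fin (m + 1))) :=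
        Function.Injective.comp Fin.succAbove_right_injective Function.injective_id
      have h1 : (id ∘ p.succAbove : Fin (m + 1) → Fin (m + 2)) = p.succAbove ∘ id := rfl
      rw [evalAux_congr L (hf' := hinj) rfl h1, eval_factor L m x m p id hinj,
        evalAux_self, evalAux_self L (m + 1) x id hf]
    · -- factor f through a missed vertex
      obtain ⟨j, g, hg⟩ := exists_factor f hf h
      have hinjg : Function.Injective (j.succAbove ∘ g) := by rw [← hg]; exact hf
      have hmg : Monotone g := by
        intro a b hab
        have h2 : j.succAbove (g a) ≤ j.succAbove (g b) := by
          have h3 := hmono hab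
          rw [hg] at h3
          exact h3
        exact (Fin.strictMono_succAbove j).le_iff_le.mp h2
      have hinjg2 : Function.Injective (j.succAbove ∘ (g ∘ p.succAbove)) :=
        hinjg.comp Fin.succAbove_right_injective
      have hc : f ∘ p.succAbove = j.succAbove ∘ (g ∘ p.succAbove) := by
        rw [hg]; rfl
      rw [evalAux_congr L (hf' := hinjg2) rfl hc,
        eval_factor L N x m j (g ∘ p.succAbove) hinjg2,
        IH (L.d N j x) m g hmg (inj_of_factor hinjg rfl) p,
        evalAux_congr L (hf' := hinjg) (hf := hf) rfl hg,
        eval_factor L N x (m + 1) j g hinjg]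

end EvalMore
section Horn

variable (n : ℕ) (i : Fin (n + 2))

/-- A simplex of `Δ[n+1]` lies in the horn `Λ^i[n+1]` iff it misses a vertex `j ≠ i`. -/
def IsHorn {m : ℕ} (f : (simplexDSet (n + 1)).X m) : Prop :=
  ∃ j, j ≠ i ∧ j ∉ Set.range f.1

/-- The top simplex of `Δ[n+1]`. -/
def topS : (simplexDSet (n + 1)).X (n + 1) := ⟨id, monotone_id, Function.injective_id⟩

/-- The `i`-th face of the top simplex. -/
def faceS : (simplexDSet (n + 1)).X n := (simplexDSet (n + 1)).d n i (topS n)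

lemma not_isHorn_top : ¬ IsHorn n i (topS n) := by
  rintro ⟨j, hj, hr⟩
  exact hr ⟨j, rfl⟩

lemma not_isHorn_face : ¬ IsHorn n i (faceS n i) := by
  rintro ⟨j, hj, hr⟩
  apply hr
  have : j ∈ Set.range (i.succAbove) := by
    rw [Fin.range_succAbove]
    simpa using hj
  exact this

lemma isHorn_d {m : ℕ} (f : (simplexDSet (n + 1)).X (m + 1)) (h : IsHorn n i f)
    (p : Fin (m + 2)) : IsHorn n i ((simplexDSet (n + 1)).d m p f) := by
  obtain ⟨j, hj, hr⟩ := h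
  exact ⟨j, hj, fun ⟨a, ha⟩ => hr ⟨p.succAbove a, ha⟩⟩

/-- Repackage a horn simplex as an element of `hornDSet`. -/
def toHorn {m : ℕ} (f : (simplexDSet (n + 1)).X m) (h : IsHorn n i f) :
    (hornDSet (n + 1) i).X m := ⟨f.1, f.2, h⟩

lemma toHorn_d {m : ℕ} (f : (simplexDSet (n + 1)).X (m + 1)) (h : IsHorn n i f)
    (p : Fin (m + 2)) :
    (hornDSet (n + 1) i).d m p (toHorn n i f h)
      = toHorn n i ((simplexDSet (n + 1)).d m p f) (isHorn_d n i f h p) := rfl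

lemma hornIncl_toHorn {m : ℕ} (f : (simplexDSet (n + 1)).X m) (h : IsHorn n i f) :
    (hornIncl (n + 1) i).app m (toHorn n i f h) = f := rfl

lemma toHorn_congr {m : ℕ} (f g : (simplexDSet (n + 1)).X m) (hf : IsHorn n i f)
    (hg : IsHorn n i g) (h : f = g) : toHorn n i f hf = toHorn n i g hg := by
  subst h; rfl

lemma nonHorn_cases {m : ℕ} (f : (simplexDSet (n + 1)).X m) (hf : ¬ IsHorn n i f) :
    (∃ _ : m = n + 1, HEq f (topS n)) ∨ (∃ _ : m = n, HEq f (faceS n i)) := by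
  have hall : ∀ j, j ≠ i → j ∈ Set.range f.1 := by
    intro j hj
    by_contra hr
    exact hf ⟨j, hj, hr⟩
  have hup : m ≤ n + 1 := inj_card_le f.1 f.2.2
  have hlo : n ≤ m := by
    have F : ∀ j : {j : Fin (n + 2) // j ≠ i}, ∃ a, f.1 a = j.1 := fun j => hall j.1 j.2
    choose F hF using F
    have hFinj : Function.Injective F := by
      intro a b hab
      apply Subtype.ext
      rw [← hF a, ← hF b, hab]
    have := Fintype.card_le_of_injective F hFinj
    rw [Fintype.card_subtype_compl, Fintype.card_subtype_eq] at this
    simpa using this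
  have hcase : m = n ∨ m = n + 1 := by omega
  rcases hcase with h | h
  · replace h := h.symm; subst h -- m = n : f = faceS
    right
    refine ⟨rfl, ?_⟩
    have hrange : Set.range f.1 = Set.range (i.succAbove) := by
      rw [Fin.range_succAbove]
      apply Set.eq_of_subset_of_subset
      · intro y hy
        simp only [Set.mem_compl_iff, Set.mem_singleton_iff]
        intro hyi
        have hy' : i ∈ Set.range f.1 := hyi ▸ hy
        -- i ∈ range f.1 ⇒ f.1 surjective ⇒ contradiction
        have hsurj : Function.Surjective f.1 := by
          intro j
          by_cases hji : j = i
          · subst hji; exact hy'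
          · exact hall j hji
        have := Fintype.card_le_of_surjective f.1 hsurj
        simp at this
      · intro y hy
        simp only [Set.mem_compl_iff, Set.mem_singleton_iff] at hy
        exact hall y hy
    have : f.1 = i.succAbove := by
      apply (StrictMono.range_inj (f.2.1.strictMono_of_injective f.2.2)
        (Fin.strictMono_succAbove i)).mp hrange
    have hff : f = faceS n i := Subtype.ext this
    rw [hff]
  · replace h := h.symm; subst h
    -- m = n + 1 : f = topS
    left
    refine ⟨rfl, ?_⟩
    have : f.1 = id := by
      apply (StrictMono.range_inj (f.2.1.strictMono_of_injective f.2.2) strictMono_id).mp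
      rw [Set.range_id, Set.range_eq_univ]
      exact Finite.injective_iff_surjective.mp f.2.2
    have hff : f = topS n := Subtype.ext this
    rw [hff]

end Horn
section Forward

lemma dd_mem {L : DSet} (K : DSub L) (m : ℕ) (e : L.X (m + 2)) (i : Fin (m + 3))
    (hfaces : ∀ j, j ≠ i → L.d (m + 1) j e ∈ K.mem (m + 1)) (p : Fin (m + 2)) :
    L.d m p (L.d (m + 1) i e) ∈ K.mem m := by
  by_cases hc : p.castSucc < i
  · have h0 : i ≠ 0 := by
      intro h
      rw [h] at hc
      exact Fin.not_lt_zero _ hc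
    have hle : p ≤ i.pred h0 := by
      rw [← Fin.castSucc_lt_succ_iff, Fin.succ_pred]
      exact hc
    have hrel := L.rel m p (i.pred h0) hle e
    rw [Fin.succ_pred] at hrel
    rw [hrel]
    apply K.stable
    apply hfaces
    exact Fin.ne_of_lt hc
  · push_neg at hc
    have hlast : i ≠ Fin.last (m + 2) := by
      intro h
      rw [h] at hc
      exact absurd (lt_of_le_of_lt hc (Fin.castSucc_lt_last p)) (lt_irrefl _)
    have hle : i.castPred hlast ≤ p := by
      rw [← Fin.castSucc_le_castSucc_iff, Fin.castSucc_castPred]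
      exact hc
    have hrel := L.rel m (i.castPred hlast) p hle e
    rw [Fin.castSucc_castPred] at hrel
    rw [← hrel]
    apply K.stable
    apply hfaces
    intro h
    rw [← h] at hc
    exact absurd (lt_of_le_of_lt hc (Fin.castSucc_lt_succ (i := p))) (lt_irrefl _)

lemma forward_dir (L : DSet) (K : DSub L) (n : ℕ) (hyp : IsElemExpansion L K n) :
    ∃ (i : Fin (n + 2)) (u : DHom (hornDSet (n + 1) i) K.toDSet)
      (v : DHom (simplexDSet (n + 1)) L),
      IsPushoutSq (hornIncl (n + 1) i) u v K.ι := by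
  classical
  obtain ⟨e, i, he, hdie, hfaces, hall⟩ := hyp
  set ev : ∀ m, (simplexDSet (n + 1)).X m → L.X m :=
    fun m f => evalAux L (n + 1) e m f.1 f.2.2 with hev
  have hevcomm : ∀ (m : ℕ) (p : Fin (m + 2)) (x : (simplexDSet (n + 1)).X (m + 1)),
      ev m ((simplexDSet (n + 1)).d m p x) = L.d m p (ev (m + 1) x) :=
    fun m p x => eval_comm L (n + 1) e m x.1 x.2.1 x.2.2 p
  have hevtop : ev (n + 1) (topS n) = e := evalAux_self L (n + 1) e _ _
  have hevface : ev n (faceS n i) = L.d n i e := by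
    rw [show faceS n i = (simplexDSet (n + 1)).d n i (topS n) from rfl, hevcomm, hevtop]
  have hornEvalMem : ∀ (m : ℕ) (f : (simplexDSet (n + 1)).X m), IsHorn n i f →
      ev m f ∈ K.mem m := by
    intro m f hf
    obtain ⟨j, hji, hjr⟩ := hf
    obtain ⟨g, hg⟩ := factor_of_missed f.1 hjr
    have hinj' : Function.Injective (j.succAbove ∘ g) := by rw [← hg]; exact f.2.2
    have heq : ev m f = evalAux L n (L.d n j e) m g (inj_of_factor hinj' rfl) := by
      rw [hev]
      dsimp only
      rw [evalAux_congr L (hf' := hinj') rfl hg]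
      exact eval_factor L n e m j g hinj'
    rw [heq]
    exact eval_mem K n _ (hfaces j hji) m g _
  set v : DHom (simplexDSet (n + 1)) L := ⟨fun m f => ev m f, hevcomm⟩ with hv
  set u : DHom (hornDSet (n + 1) i) K.toDSet :=
    ⟨fun m f => ⟨ev m ⟨f.1, f.2.1⟩, hornEvalMem m ⟨f.1, f.2.1⟩ f.2.2⟩,
      fun m p x => Subtype.ext (hevcomm m p ⟨x.1, x.2.1⟩)⟩ with hu
  refine ⟨i, u, v, rfl, ?_⟩
  intro W a b hab
  have habp : ∀ (m : ℕ) (f : (hornDSet (n + 1) i).X m),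
      a.app m ((hornIncl (n + 1) i).app m f) = b.app m (u.app m f) :=
    fun m f => congrFun (congrFun (congrArg DHom.app hab) m) f
  set cApp : ∀ m, L.X m → W.X m := fun m z =>
    if hz : z ∈ K.mem m then b.app m ⟨z, hz⟩
    else if h1 : m = n + 1 then
      a.app m (cast (congrArg (simplexDSet (n + 1)).X h1.symm) (topS n))
    else
      a.app m (cast (congrArg (simplexDSet (n + 1)).X
        (show m = n by
          rcases hall m z with h | ⟨h2, _⟩ | ⟨h2, _⟩
          · exact absurd h hz
          · exact absurd h2 h1
          · exact h2).symm) (faceS n i)) with hcApp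
  have hc0 : ∀ (m : ℕ) (z : L.X m) (hz : z ∈ K.mem m), cApp m z = b.app m ⟨z, hz⟩ := by
    intro m z hz
    simp only [hcApp]
    rw [dif_pos hz]
  have hc1 : ∀ (z : L.X (n + 1)), z ∉ K.mem (n + 1) →
      cApp (n + 1) z = a.app (n + 1) (topS n) := by
    intro z hz
    simp only [hcApp]
    rw [dif_neg hz]
    simp
  have hc2 : ∀ (z : L.X n), z ∉ K.mem n → cApp n z = a.app n (faceS n i) := by
    intro z hz
    simp only [hcApp]
    rw [dif_neg hz]
    simp
  have hcomm : ∀ (m : ℕ) (p : Fin (m + 2)) (x : L.X (m + 1)),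
      cApp m (L.d m p x) = W.d m p (cApp (m + 1) x) := by
    intro m p x
    rcases hall (m + 1) x with hx | ⟨hm, hx⟩ | ⟨hm, hx⟩
    · rw [hc0 m _ (K.stable m p x hx), hc0 (m + 1) x hx]
      exact b.comm m p ⟨x, hx⟩
    · have hmn : m = n := by omega
      subst hmn
      replace hx := eq_of_heq hx
      subst hx
      rw [hc1 x he]
      by_cases hpi : p = i
      · subst hpi
        rw [hc2 _ hdie]
        exact a.comm _ p (topS _)
      · have hKm : L.d _ p x ∈ K.mem _ := hfaces p hpi
        rw [hc0 _ _ hKm]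
        have hhorn : IsHorn _ i ((simplexDSet _).d _ p (topS _)) :=
          ⟨p, hpi, by rintro ⟨y, hy⟩; exact Fin.succAbove_ne p y hy⟩
        have h3 := habp _ (toHorn _ i _ hhorn)
        rw [hornIncl_toHorn] at h3
        have h4 : b.app _ (⟨L.d _ p x, hKm⟩ : K.toDSet.X _)
            = b.app _ (u.app _ (toHorn _ i _ hhorn)) := by
          apply congrArg
          apply Subtype.ext
          show L.d _ p x = ev _ ((simplexDSet _).d _ p (topS _))
          rw [hevcomm, hevtop]
        rw [h4, ← h3]
        exact a.comm _ p (topS _)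
    · replace hm := hm.symm
      subst hm
      replace hx := eq_of_heq hx
      subst hx
      have hdd := dd_mem K m e i hfaces p
      rw [hc0 _ _ hdd, hc2 _ hdie]
      have hhorn : IsHorn _ i ((simplexDSet _).d m p (faceS _ i)) := by
        refine ⟨i.succAbove p, Fin.succAbove_ne i p, ?_⟩
        rintro ⟨y, hy⟩
        have : i.succAbove (p.succAbove y) = i.succAbove p := hy
        exact Fin.succAbove_ne p y (Fin.succAbove_right_injective this)
      have h3 := habp m (toHorn _ i _ hhorn)
      rw [hornIncl_toHorn] at h3
      have h4 : b.app m (⟨L.d m p (L.d (m + 1) i e), hdd⟩ : K.toDSet.X m)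
          = b.app m (u.app m (toHorn _ i _ hhorn)) := by
        apply congrArg
        apply Subtype.ext
        show L.d m p (L.d (m + 1) i e) = ev m ((simplexDSet _).d m p (faceS _ i))
        rw [hevcomm, hevface]
      rw [h4, ← h3]
      exact a.comm m p (faceS _ i)
  refine ⟨⟨cApp, hcomm⟩, ⟨?_, ?_⟩, ?_⟩
  · -- v.comp c = a
    apply DHom.ext
    funext m f
    show cApp m (ev m f) = a.app m f
    by_cases hH : IsHorn n i f
    · rw [hc0 _ _ (hornEvalMem m f hH)]
      exact (habp m (toHorn n i f hH)).symm
    · rcases nonHorn_cases n i f hH with ⟨hm, hf⟩ | ⟨hm, hf⟩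
      · subst hm
        replace hf := eq_of_heq hf
        subst hf
        rw [hevtop, hc1 _ he]
      · subst hm
        replace hf := eq_of_heq hf
        subst hf
        rw [hevface, hc2 _ hdie]
  · -- K.ι.comp c = b
    apply DHom.ext
    funext m k
    show cApp m k.1 = b.app m k
    rw [hc0 m k.1 k.2]
    rfl
  · rintro c' ⟨h1, h2⟩
    have h1p : ∀ (m : ℕ) (f : (simplexDSet (n + 1)).X m), c'.app m (ev m f) = a.app m f :=
      fun m f => congrFun (congrFun (congrArg DHom.app h1) m) f
    have h2p : ∀ (m : ℕ) (k : K.toDSet.X m), c'.app m k.1 = b.app m k :=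
      fun m k => congrFun (congrFun (congrArg DHom.app h2) m) k
    apply DHom.ext
    funext m z
    show c'.app m z = cApp m z
    rcases hall m z with hz | ⟨hm, hx⟩ | ⟨hm, hx⟩
    · rw [hc0 m z hz]
      exact h2p m ⟨z, hz⟩
    · subst hm
      replace hx := eq_of_heq hx
      subst hx
      rw [hc1 _ he, ← hevtop]
      exact h1p _ (topS _)
    · replace hm := hm.symm
      subst hm
      replace hx := eq_of_heq hx
      subst hx
      rw [hc2 _ hdie, ← hevface]
      exact h1p _ (faceS _ i)

end Forward
section QConstruction

attribute [local instance] Classical.propDecidable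

variable (n : ℕ) (i : Fin (n + 2)) (KD : DSet) (u : DHom (hornDSet (n + 1) i) KD)

/-- Underlying graded sets of the explicit pushout. -/
def QX (m : ℕ) : Type := KD.X m ⊕ {f : (simplexDSet (n + 1)).X m // ¬ IsHorn n i f}

/-- Face maps of the explicit pushout. -/
noncomputable def Qd (m : ℕ) (p : Fin (m + 2)) (z : QX n i KD (m + 1)) : QX n i KD m :=
  match z with
  | .inl k => .inl (KD.d m p k)
  | .inr f =>
    if h : IsHorn n i ((simplexDSet (n + 1)).d m p f.1) then
      .inl (u.app m (toHorn n i _ h))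
    else .inr ⟨(simplexDSet (n + 1)).d m p f.1, h⟩

lemma Qd_inl (m : ℕ) (p : Fin (m + 2)) (k : KD.X (m + 1)) :
    Qd n i KD u m p (.inl k) = .inl (KD.d m p k) := rfl

lemma Qd_inr_pos (m : ℕ) (p : Fin (m + 2)) (f : {f : (simplexDSet (n + 1)).X (m + 1) // ¬ IsHorn n i f})
    (h : IsHorn n i ((simplexDSet (n + 1)).d m p f.1)) :
    Qd n i KD u m p (.inr f) = .inl (u.app m (toHorn n i _ h)) := dif_pos h

lemma Qd_inr_neg (m : ℕ) (p : Fin (m + 2)) (f : {f : (simplexDSet (n + 1)).X (m + 1) // ¬ IsHorn n i f})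
    (h : ¬ IsHorn n i ((simplexDSet (n + 1)).d m p f.1)) :
    Qd n i KD u m p (.inr f) = .inr ⟨(simplexDSet (n + 1)).d m p f.1, h⟩ := dif_neg h

/-- The explicit pushout of `Λ^i[n+1] → Δ[n+1]` along `u : Λ^i[n+1] → KD`. -/
noncomputable def QSet : DSet where
  X := QX n i KD
  d := Qd n i KD u
  rel m p q hpq z := by
    match z with
    | .inl k =>
      rw [Qd_inl, Qd_inl, Qd_inl, Qd_inl]
      exact congrArg Sum.inl (KD.rel m p q hpq k)
    | .inr f =>
      have hT : (simplexDSet (n + 1)).d m p ((simplexDSet (n + 1)).d (m + 1) q.succ f.1)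
          = (simplexDSet (n + 1)).d m q ((simplexDSet (n + 1)).d (m + 1) p.castSucc f.1) :=
        (simplexDSet (n + 1)).rel m p q hpq f.1
      by_cases h₁ : IsHorn n i ((simplexDSet (n + 1)).d (m + 1) q.succ f.1) <;>
        by_cases h₂ : IsHorn n i ((simplexDSet (n + 1)).d (m + 1) p.castSucc f.1)
      · rw [Qd_inr_pos n i KD u (m + 1) q.succ f h₁, Qd_inr_pos n i KD u (m + 1) p.castSucc f h₂,
          Qd_inl, Qd_inl, ← u.comm, ← u.comm, toHorn_d, toHorn_d]
        exact congrArg Sum.inl (congrArg (u.app m) (toHorn_congr n i _ _ _ _ hT))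
      · have ht1 : IsHorn n i ((simplexDSet (n + 1)).d m p ((simplexDSet (n + 1)).d (m + 1) q.succ f.1)) :=
          isHorn_d n i _ h₁ p
        rw [Qd_inr_pos n i KD u (m + 1) q.succ f h₁, Qd_inr_neg n i KD u (m + 1) p.castSucc f h₂,
          Qd_inl, ← u.comm, toHorn_d, Qd_inr_pos n i KD u m q _ (hT ▸ ht1)]
        exact congrArg Sum.inl (congrArg (u.app m) (toHorn_congr n i _ _ _ _ hT))
      · have ht2 : IsHorn n i ((simplexDSet (n + 1)).d m q ((simplexDSet (n + 1)).d (m + 1) p.castSucc f.1)) :=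
          isHorn_d n i _ h₂ q
        rw [Qd_inr_neg n i KD u (m + 1) q.succ f h₁, Qd_inr_pos n i KD u (m + 1) p.castSucc f h₂,
          Qd_inl, ← u.comm, toHorn_d, Qd_inr_pos n i KD u m p _ (hT.symm ▸ ht2)]
        exact congrArg Sum.inl (congrArg (u.app m) (toHorn_congr n i _ _ _ _ hT))
      · rw [Qd_inr_neg n i KD u (m + 1) q.succ f h₁, Qd_inr_neg n i KD u (m + 1) p.castSucc f h₂]
        by_cases ht : IsHorn n i ((simplexDSet (n + 1)).d m p ((simplexDSet (n + 1)).d (m + 1) q.succ f.1))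
        · rw [Qd_inr_pos n i KD u m p _ ht, Qd_inr_pos n i KD u m q _ (hT ▸ ht)]
          exact congrArg Sum.inl (congrArg (u.app m) (toHorn_congr n i _ _ _ _ hT))
        · rw [Qd_inr_neg n i KD u m p _ ht, Qd_inr_neg n i KD u m q _ (hT ▸ ht)]
          exact congrArg Sum.inr (Subtype.ext hT)

/-- Left leg `KD → Q`. -/
noncomputable def qInl : DHom KD (QSet n i KD u) where
  app m k := Sum.inl k
  comm _ _ _ := rfl

/-- The level map of the right leg. -/
noncomputable def qInrApp (m : ℕ) (f : (simplexDSet (n + 1)).X m) : QX n i KD m :=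
  if h : IsHorn n i f then .inl (u.app m (toHorn n i f h))
  else .inr ⟨f, h⟩

lemma qInrApp_pos (m : ℕ) (f : (simplexDSet (n + 1)).X m) (h : IsHorn n i f) :
    qInrApp n i KD u m f = .inl (u.app m (toHorn n i f h)) := dif_pos h

lemma qInrApp_neg (m : ℕ) (f : (simplexDSet (n + 1)).X m) (h : ¬ IsHorn n i f) :
    qInrApp n i KD u m f = .inr ⟨f, h⟩ := dif_neg h

/-- Right leg `Δ[n+1] → Q`. -/
noncomputable def qInr : DHom (simplexDSet (n + 1)) (QSet n i KD u) where
  app := qInrApp n i KD u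
  comm m p x := by
    by_cases hx : IsHorn n i x
    · rw [qInrApp_pos n i KD u (m + 1) x hx,
        qInrApp_pos n i KD u m _ (isHorn_d n i x hx p)]
      show _ = Qd n i KD u m p (.inl (u.app (m + 1) (toHorn n i x hx)))
      rw [Qd_inl, ← u.comm, toHorn_d]
    · rw [qInrApp_neg n i KD u (m + 1) x hx]
      show qInrApp n i KD u m ((simplexDSet (n + 1)).d m p x) = Qd n i KD u m p (.inr ⟨x, hx⟩)
      by_cases h : IsHorn n i ((simplexDSet (n + 1)).d m p x)
      · rw [qInrApp_pos n i KD u m _ h, Qd_inr_pos n i KD u m p _ h]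
      · rw [qInrApp_neg n i KD u m _ h, Qd_inr_neg n i KD u m p _ h]

lemma q_square : (hornIncl (n + 1) i).comp (qInr n i KD u) = u.comp (qInl n i KD u) := by
  apply DHom.ext
  funext m f
  show qInrApp n i KD u m ((hornIncl (n + 1) i).app m f) = Sum.inl (u.app m f)
  rw [qInrApp_pos n i KD u m _ (show IsHorn n i ((hornIncl (n + 1) i).app m f) from f.2.2)]
  rfl

/-- The descended map out of the pushout. -/
noncomputable def qDescApp (W : DSet) (a : DHom (simplexDSet (n + 1)) W) (b : DHom KD W)
    (m : ℕ) (z : QX n i KD m) : W.X m :=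
  match z with
  | .inl k => b.app m k
  | .inr f => a.app m f.1

lemma q_up : ∀ (W : DSet) (a : DHom (simplexDSet (n + 1)) W) (b : DHom KD W),
    (hornIncl (n + 1) i).comp a = u.comp b →
    ∃! c : DHom (QSet n i KD u) W, (qInr n i KD u).comp c = a ∧ (qInl n i KD u).comp c = b := by
  intro W a b hab
  have habp : ∀ (m : ℕ) (f : (hornDSet (n + 1) i).X m),
      a.app m ((hornIncl (n + 1) i).app m f) = b.app m (u.app m f) :=
    fun m f => congrFun (congrFun (congrArg DHom.app hab) m) f
  have hcomm : ∀ (m : ℕ) (p : Fin (m + 2)) (z : (QSet n i KD u).X (m + 1)),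
      qDescApp n i KD W a b m ((QSet n i KD u).d m p z)
      = W.d m p (qDescApp n i KD W a b (m + 1) z) := by
    intro m p z
    match z with
    | .inl k => exact b.comm m p k
    | .inr f =>
      show qDescApp n i KD W a b m (Qd n i KD u m p (.inr f)) = W.d m p (a.app (m + 1) f.1)
      by_cases h : IsHorn n i ((simplexDSet (n + 1)).d m p f.1)
      · rw [Qd_inr_pos n i KD u m p f h]
        show b.app m (u.app m (toHorn n i _ h)) = _
        rw [← habp m (toHorn n i _ h), hornIncl_toHorn]
        exact a.comm m p f.1
      · rw [Qd_inr_neg n i KD u m p f h]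
        exact a.comm m p f.1
  refine ⟨⟨qDescApp n i KD W a b, hcomm⟩, ⟨?_, ?_⟩, ?_⟩
  · apply DHom.ext
    funext m f
    show qDescApp n i KD W a b m (qInrApp n i KD u m f) = a.app m f
    by_cases h : IsHorn n i f
    · rw [qInrApp_pos n i KD u m f h]
      show b.app m (u.app m (toHorn n i f h)) = a.app m f
      rw [← habp m (toHorn n i f h), hornIncl_toHorn]
    · rw [qInrApp_neg n i KD u m f h]
      rfl
  · apply DHom.ext
    funext m k
    rfl
  · rintro c' ⟨h1, h2⟩
    have h1p : ∀ (m : ℕ) (f : (simplexDSet (n + 1)).X m),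
        c'.app m (qInrApp n i KD u m f) = a.app m f :=
      fun m f => congrFun (congrFun (congrArg DHom.app h1) m) f
    have h2p : ∀ (m : ℕ) (k : KD.X m), c'.app m (Sum.inl k) = b.app m k :=
      fun m k => congrFun (congrFun (congrArg DHom.app h2) m) k
    apply DHom.ext
    funext m z
    match z with
    | .inl k => exact h2p m k
    | .inr f =>
      show c'.app m (Sum.inr f) = a.app m f.1
      have heq : (Sum.inr f : (QSet n i KD u).X m) = qInrApp n i KD u m f.1 := by
        rw [qInrApp_neg n i KD u m f.1 f.2]
      rw [heq, h1p m f.1]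

end QConstruction
section Backward

lemma backward_dir (L : DSet) (K : DSub L) (n : ℕ)
    (hyp : ∃ (i : Fin (n + 2)) (u : DHom (hornDSet (n + 1) i) K.toDSet)
      (v : DHom (simplexDSet (n + 1)) L),
      IsPushoutSq (hornIncl (n + 1) i) u v K.ι) :
    IsElemExpansion L K n := by
  obtain ⟨i, u, v, hsq, hup⟩ := hyp
  obtain ⟨c, ⟨hc1, hc2⟩, -⟩ := hup (QSet n i K.toDSet u) (qInr n i K.toDSet u)
    (qInl n i K.toDSet u) (q_square n i K.toDSet u)
  obtain ⟨c', ⟨hd1, hd2⟩, -⟩ := q_up n i K.toDSet u L v K.ι hsq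
  obtain ⟨cid, -, huniq⟩ := hup L v K.ι hsq
  have hA : c.comp c' = cid := by
    apply huniq
    constructor
    · show v.comp (c.comp c') = v
      have hassoc : v.comp (c.comp c') = (v.comp c).comp c' := rfl
      rw [hassoc, hc1, hd1]
    · show K.ι.comp (c.comp c') = K.ι
      have hassoc : K.ι.comp (c.comp c') = (K.ι.comp c).comp c' := rfl
      rw [hassoc, hc2, hd2]
  have hB : (⟨fun _ z => z, fun _ _ _ => rfl⟩ : DHom L L) = cid := by
    apply huniq
    exact ⟨rfl, rfl⟩
  have hid : c.comp c' = ⟨fun _ z => z, fun _ _ _ => rfl⟩ := hA.trans hB.symm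
  have hcc : ∀ (m : ℕ) (z : L.X m), c'.app m (c.app m z) = z :=
    fun m z => congrFun (congrFun (congrArg DHom.app hid) m) z
  have hc1p : ∀ (m : ℕ) (f : (simplexDSet (n + 1)).X m),
      c.app m (v.app m f) = qInrApp n i K.toDSet u m f :=
    fun m f => congrFun (congrFun (congrArg DHom.app hc1) m) f
  have hc2p : ∀ (m : ℕ) (k : K.toDSet.X m), c.app m k.1 = Sum.inl k :=
    fun m k => congrFun (congrFun (congrArg DHom.app hc2) m) k
  have hd1p : ∀ (m : ℕ) (f : (simplexDSet (n + 1)).X m),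
      c'.app m (qInrApp n i K.toDSet u m f) = v.app m f :=
    fun m f => congrFun (congrFun (congrArg DHom.app hd1) m) f
  have hd2p : ∀ (m : ℕ) (k : K.toDSet.X m), c'.app m (Sum.inl k) = k.1 :=
    fun m k => congrFun (congrFun (congrArg DHom.app hd2) m) k
  have hsqp : ∀ (m : ℕ) (f : (hornDSet (n + 1) i).X m),
      v.app m ((hornIncl (n + 1) i).app m f) = (u.app m f).1 :=
    fun m f => congrFun (congrFun (congrArg DHom.app hsq) m) f
  have hnotK : ∀ (m : ℕ) (f : (simplexDSet (n + 1)).X m), ¬ IsHorn n i f →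
      v.app m f ∉ K.mem m := by
    intro m f hH hmem
    have h1 : c.app m (v.app m f) = Sum.inl ⟨v.app m f, hmem⟩ := hc2p m ⟨v.app m f, hmem⟩
    have h2 : c.app m (v.app m f) = qInrApp n i K.toDSet u m f := hc1p m f
    rw [qInrApp_neg n i K.toDSet u m f hH] at h2
    exact Sum.inl_ne_inr (h1.symm.trans h2)
  refine ⟨v.app (n + 1) (topS n), i, ?_, ?_, ?_, ?_⟩
  · exact hnotK (n + 1) (topS n) (not_isHorn_top n i)
  · have hf : L.d n i (v.app (n + 1) (topS n)) = v.app n (faceS n i) :=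
      (v.comm n i (topS n)).symm
    rw [hf]
    exact hnotK n (faceS n i) (not_isHorn_face n i)
  · intro j hj
    have hhorn : IsHorn n i ((simplexDSet (n + 1)).d n j (topS n)) :=
      ⟨j, hj, by rintro ⟨y, hy⟩; exact Fin.succAbove_ne j y hy⟩
    have hfj : L.d n j (v.app (n + 1) (topS n))
        = v.app n ((simplexDSet (n + 1)).d n j (topS n)) := (v.comm n j (topS n)).symm
    rw [hfj]
    have hval := hsqp n (toHorn n i _ hhorn)
    rw [hornIncl_toHorn] at hval
    rw [hval]
    exact (u.app n (toHorn n i _ hhorn)).2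
  · intro m z
    have hz : c'.app m (c.app m z) = z := hcc m z
    match hcz : c.app m z with
    | .inl k =>
      left
      have hzk : z = k.1 := by rw [← hz, hcz]; exact hd2p m k
      rw [hzk]
      exact k.2
    | .inr f =>
      have hq : (Sum.inr f : QX n i K.toDSet m) = qInrApp n i K.toDSet u m f.1 :=
        (qInrApp_neg n i K.toDSet u m f.1 f.2).symm
      have hzv : z = v.app m f.1 := by rw [← hz, hcz, hq]; exact hd1p m f.1
      rcases nonHorn_cases n i f.1 f.2 with ⟨hm, hf⟩ | ⟨hm, hf⟩
      · right; left
        subst hm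
        refine ⟨rfl, ?_⟩
        replace hf := eq_of_heq hf
        rw [hzv, hf]
      · right; right
        replace hm := hm.symm
        subst hm
        refine ⟨rfl, ?_⟩
        replace hf := eq_of_heq hf
        rw [hzv, hf]
        exact heq_of_eq (v.comm n i (topS n))

end Backward

/-- An inclusion `K ⊆ L` of Δ-sets is an elementary expansion of
dimension `n+1` if and only if there is a pushout square of Δ-sets whose top row is a
horn inclusion `Λ^i[n+1] → Δ[n+1]`, whose left vertical map is a map `Λ^i[n+1] → K`,
and whose bottom row is the inclusion `K → L`, for some `i ∈ {0, …, n+1}`. -/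
theorem isElemExpansion_iff_pushout_of_horn (L : DSet) (K : DSub L) (n : ℕ) :
    IsElemExpansion L K n ↔
      ∃ (i : Fin (n + 2)) (u : DHom (hornDSet (n + 1) i) K.toDSet)
        (v : DHom (simplexDSet (n + 1)) L),
        IsPushoutSq (hornIncl (n + 1) i) u v K.ι :=
  ⟨forward_dir L K n, backward_dir L K n⟩
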